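/- Let $0 \leq b_1, \ldots, b_r \leq q-2$. The toric code obtained by evaluating all polynomials $f \in \mathbb{F}_q[t_1,\ldots,t_r]$ with $\deg_{t_i} f \leq b_i$ for each $i$ at all points of $(\mathbb{F}_q^\ast)^r$ has parameters $[(q-1)^r, \prod_{i=1}^r (b_i+1), \prod_{i=1}^r (q-1-b_i)]$, i.e., length $(q-1)^r$, dimension $\prod (b_i+1)$, and minimum distance exactly $\prod (q-1-b_i)$. -/

import Mathlib

open Finset MvPolynomial

lemma count_units_nonroot {F : Type*} [Field F] [Fintype F] [DecidableEq F]
    {p : Polynomial F} (hp : p ≠ 0) {d : ℕ} (hd : p.natDegree ≤ d) :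
    Fintype.card F - 1 - d ≤ (univ.filter fun a : Fˣ => Polynomial.eval (a : F) p ≠ 0).card := by
  have hz : (univ.filter fun a : Fˣ => Polynomial.eval (a : F) p = 0).card ≤ d := by
    have h1 : (univ.filter fun a : Fˣ => Polynomial.eval (a : F) p = 0).card
        ≤ p.roots.toFinset.card :=
      Finset.card_le_card_of_injOn (fun a => (a : F))
        (by
          intro a ha
          simp only [Finset.mem_coe, mem_filter, mem_univ, true_and] at ha
          rw [Finset.mem_coe, Multiset.mem_toFinset, Polynomial.mem_roots hp]
          exact ha)
        (by intro a _ b _ hab; exact Units.ext hab)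
    exact h1.trans ((p.roots.toFinset_card_le).trans ((Polynomial.card_roots' p).trans hd))
  have htot := Finset.card_filter_add_card_filter_not
    (s := (univ : Finset Fˣ)) (p := fun a => Polynomial.eval (a : F) p = 0)
  have hcard : Fintype.card Fˣ = Fintype.card F - 1 := Fintype.card_units (α := F)
  simp only [Finset.card_univ, ne_eq] at htot ⊢
  omega

lemma key_count {F : Type*} [Field F] [Fintype F] [DecidableEq F] :
    ∀ (n : ℕ) (b : Fin n → ℕ) (f : MvPolynomial (Fin n) F), f ≠ 0 →
      (∀ i, MvPolynomial.degreeOf i f ≤ b i) →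
      ∏ i, (Fintype.card F - 1 - b i) ≤
        (univ.filter fun t : Fin n → Fˣ =>
          MvPolynomial.eval (fun i => (t i : F)) f ≠ 0).card := by
  intro n
  induction n with
  | zero =>
    intro b f hf _
    obtain ⟨a, rfl⟩ := MvPolynomial.C_surjective (Fin 0) f
    have ha : a ≠ 0 := fun h => hf (by simp [h])
    simp only [Fin.prod_univ_zero]
    refine Finset.card_pos.mpr ⟨default, ?_⟩
    simp only [Finset.mem_filter, Finset.mem_univ, true_and, ne_eq, MvPolynomial.eval_C]
    exact ha
  | succ n ih =>
    intro b f hf hdeg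
    set p := MvPolynomial.finSuccEquiv F n f with hpdef
    have hp0 : p ≠ 0 := by
      rw [hpdef]
      exact (map_ne_zero_iff _ (AlgEquiv.injective _)).mpr hf
    set g := p.coeff p.natDegree with hgdef
    have hg0 : g ≠ 0 := Polynomial.leadingCoeff_ne_zero.mpr hp0
    have hgdeg : ∀ i : Fin n, MvPolynomial.degreeOf i g ≤ b i.succ := fun i =>
      (MvPolynomial.degreeOf_coeff_finSuccEquiv f i p.natDegree).trans (hdeg i.succ)
    set S := univ.filter fun s : Fin n → Fˣ =>
      MvPolynomial.eval (fun i => (s i : F)) g ≠ 0 with hSdef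
    have hS : ∏ i : Fin n, (Fintype.card F - 1 - b i.succ) ≤ S.card :=
      ih (fun i => b i.succ) g hg0 hgdeg
    have hfiber : ∀ s ∈ S, Fintype.card F - 1 - b 0 ≤
        (univ.filter fun a : Fˣ =>
          MvPolynomial.eval (fun i => ((Fin.cons a s : Fin (n+1) → Fˣ) i : F)) f ≠ 0).card := by
      intro s hs
      rw [hSdef, mem_filter] at hs
      set qs := p.map (MvPolynomial.eval (fun i => (s i : F))) with hqs
      have hcoeffmap : qs.coeff p.natDegree = MvPolynomial.eval (fun i => (s i : F)) g := by
        rw [hqs, Polynomial.coeff_map, hgdef]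
      have hqs0 : qs ≠ 0 := fun h => hs.2 (by rw [← hcoeffmap, h, Polynomial.coeff_zero])
      have hqsd : qs.natDegree ≤ b 0 :=
        Polynomial.natDegree_map_le.trans
          ((MvPolynomial.natDegree_finSuccEquiv f).le.trans (hdeg 0))
      refine (count_units_nonroot hqs0 hqsd).trans (le_of_eq ?_)
      congr 1
      apply Finset.filter_congr
      intro a _
      have hco : (fun i => ((Fin.cons a s : Fin (n+1) → Fˣ) i : F))
          = Fin.cons (a : F) (fun i => (s i : F)) := by
        funext i
        refine Fin.cases ?_ ?_ i <;> simp
      rw [hco, MvPolynomial.eval_eq_eval_mv_eval']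
    set P := fun t : Fin (n+1) → Fˣ => MvPolynomial.eval (fun i => (t i : F)) f ≠ 0 with hP
    have hsplit : (univ.filter P).card =
        ∑ s : Fin n → Fˣ, ((univ.filter P).filter fun t => Fin.tail t = s).card :=
      Finset.card_eq_sum_card_fiberwise (fun t _ => mem_univ (Fin.tail t))
    have hfib_eq : ∀ s : Fin n → Fˣ,
        ((univ.filter P).filter fun t => Fin.tail t = s).card =
        (univ.filter fun a : Fˣ => P (Fin.cons a s)).card := by
      intro s
      apply Finset.card_nbij' (fun t => t 0) (fun a => Fin.cons a s)
      · intro t ht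
        rw [Finset.mem_coe, mem_filter, mem_filter] at ht
        rw [Finset.mem_coe, mem_filter]
        refine ⟨mem_univ _, ?_⟩
        rw [show Fin.cons (t 0) s = t by rw [← ht.2, Fin.cons_self_tail]]
        exact ht.1.2
      · intro a ha
        rw [Finset.mem_coe, mem_filter] at ha
        rw [Finset.mem_coe, mem_filter, mem_filter]
        exact ⟨⟨mem_univ _, ha.2⟩, by simp⟩
      · intro t ht
        rw [Finset.mem_coe, mem_filter, mem_filter] at ht
        rw [← ht.2]; exact Fin.cons_self_tail t
      · intro a _
        simp
    calc ∏ i : Fin (n+1), (Fintype.card F - 1 - b i)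
        = (Fintype.card F - 1 - b 0) * ∏ i : Fin n, (Fintype.card F - 1 - b i.succ) := by
          rw [Fin.prod_univ_succ]
      _ ≤ (Fintype.card F - 1 - b 0) * S.card := Nat.mul_le_mul_left _ hS
      _ = ∑ _s ∈ S, (Fintype.card F - 1 - b 0) := by rw [Finset.sum_const, smul_eq_mul, mul_comm]
      _ ≤ ∑ s ∈ S, (univ.filter fun a : Fˣ => P (Fin.cons a s)).card :=
          Finset.sum_le_sum hfiber
      _ ≤ ∑ s : Fin n → Fˣ, (univ.filter fun a : Fˣ => P (Fin.cons a s)).card :=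
          Finset.sum_le_sum_of_subset (Finset.subset_univ S)
      _ = (univ.filter P).card := by
          rw [hsplit]; exact Finset.sum_congr rfl fun s _ => (hfib_eq s).symm


lemma degreeOf_finset_prod_le {σ R α : Type*} [CommSemiring R] (j : σ) (s : Finset α)
    (g : α → MvPolynomial σ R) :
    MvPolynomial.degreeOf j (∏ x ∈ s, g x) ≤ ∑ x ∈ s, MvPolynomial.degreeOf j (g x) := by
  classical
  induction s using Finset.cons_induction with
  | empty =>
    simp only [Finset.prod_empty, Finset.sum_empty]
    rw [show (1 : MvPolynomial σ R) = MvPolynomial.C 1 from (map_one _).symm,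
      MvPolynomial.degreeOf_C]
  | cons a s ha ih =>
    rw [Finset.prod_cons, Finset.sum_cons]
    exact (MvPolynomial.degreeOf_mul_le _ _ _).trans (Nat.add_le_add_left ih _)

lemma degreeOf_X_sub_C_le {σ R : Type*} [CommRing R] [DecidableEq σ] (j i : σ) (a : R) :
    MvPolynomial.degreeOf j (MvPolynomial.X i - MvPolynomial.C a) ≤ if j = i then 1 else 0 := by
  rw [MvPolynomial.degreeOf_le_iff]
  intro m hm
  have h := MvPolynomial.support_sub σ (MvPolynomial.X i) (MvPolynomial.C a) hm
  rw [Finset.mem_union] at h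
  rcases h with h | h
  · have hx : m ∈ ({Finsupp.single i 1} : Finset _) := by
      have : (MvPolynomial.X i : MvPolynomial σ R) = MvPolynomial.monomial (Finsupp.single i 1) 1 := by
        rw [MvPolynomial.monomial_eq, Finsupp.prod_single_index] <;> simp
      exact MvPolynomial.support_monomial_subset (this ▸ h)
    rw [Finset.mem_singleton] at hx
    subst hx
    rw [Finsupp.single_apply]
    rcases eq_or_ne j i with hji | hji
    · simp [hji]
    · simp [hji, Ne.symm hji]
  · have hx : m ∈ ({0} : Finset _) := by
      have : (MvPolynomial.C a : MvPolynomial σ R) = MvPolynomial.monomial 0 a :=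
        MvPolynomial.C_apply
      exact MvPolynomial.support_monomial_subset (this ▸ h)
    rw [Finset.mem_singleton] at hx
    subst hx
    simp


lemma exists_min_weight_poly {F : Type*} [Field F] [Fintype F] [DecidableEq F]
    {r : ℕ} (b : Fin r → ℕ) (hb : ∀ i, b i ≤ Fintype.card F - 2) :
    ∃ f : MvPolynomial (Fin r) F, (∀ i, MvPolynomial.degreeOf i f ≤ b i) ∧
      (univ.filter fun t : Fin r → Fˣ =>
        MvPolynomial.eval (fun i => (t i : F)) f ≠ 0).card
        = ∏ i, (Fintype.card F - 1 - b i) := by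
  have hq2 : 2 ≤ Fintype.card F := Fintype.one_lt_card
  have hcardu : Fintype.card Fˣ = Fintype.card F - 1 := Fintype.card_units (α := F)
  have hble : ∀ i, b i ≤ (univ : Finset Fˣ).card := by
    intro i
    rw [card_univ, hcardu]
    have := hb i
    omega
  choose S hSsub hScard using fun i => Finset.exists_subset_card_eq (hble i)
  refine ⟨∏ i, ∏ a ∈ S i, (MvPolynomial.X i - MvPolynomial.C (a : F)), ?_, ?_⟩
  · intro j
    calc MvPolynomial.degreeOf j (∏ i, ∏ a ∈ S i, (MvPolynomial.X i - MvPolynomial.C (a : F)))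
        ≤ ∑ i, MvPolynomial.degreeOf j (∏ a ∈ S i, (MvPolynomial.X i - MvPolynomial.C (a : F))) :=
          degreeOf_finset_prod_le _ _ _
      _ ≤ ∑ i, ∑ a ∈ S i, MvPolynomial.degreeOf j (MvPolynomial.X i - MvPolynomial.C (a : F)) :=
          Finset.sum_le_sum fun i _ => degreeOf_finset_prod_le _ _ _
      _ ≤ ∑ i, ∑ _a ∈ S i, if j = i then 1 else 0 :=
          Finset.sum_le_sum fun i _ => Finset.sum_le_sum fun a _ => degreeOf_X_sub_C_le _ _ _
      _ = ∑ i, if j = i then (S i).card else 0 := by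
          refine Finset.sum_congr rfl fun i _ => ?_
          rw [Finset.sum_const, smul_eq_mul]
          split <;> simp
      _ = (S j).card := by rw [Finset.sum_ite_eq]; simp
      _ = b j := hScard j
  · have heval : ∀ t : Fin r → Fˣ,
        MvPolynomial.eval (fun i => (t i : F))
          (∏ i, ∏ a ∈ S i, (MvPolynomial.X i - MvPolynomial.C (a : F)))
        = ∏ i, ∏ a ∈ S i, ((t i : F) - (a : F)) := by
      intro t
      simp [map_prod]
    have hset : (univ.filter fun t : Fin r → Fˣ =>
        MvPolynomial.eval (fun i => (t i : F))
          (∏ i, ∏ a ∈ S i, (MvPolynomial.X i - MvPolynomial.C (a : F))) ≠ 0)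
        = Fintype.piFinset (fun i => (S i)ᶜ) := by
      ext t
      rw [mem_filter, Fintype.mem_piFinset, heval]
      simp only [mem_univ, true_and, mem_compl]
      rw [Finset.prod_ne_zero_iff]
      constructor
      · intro h i hi
        have h2 := Finset.prod_ne_zero_iff.mp (h i (mem_univ i)) (t i) hi
        simp at h2
      · intro h i _
        rw [Finset.prod_ne_zero_iff]
        intro a ha hz
        rw [sub_eq_zero] at hz
        exact h i (Units.ext hz ▸ ha)
    rw [hset, Fintype.card_piFinset]
    refine Finset.prod_congr rfl fun i _ => ?_
    rw [Finset.card_compl, hcardu, hScard]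


lemma dim_lemma {F : Type*} [Field F] [Fintype F] [DecidableEq F]
    {r : ℕ} (b : Fin r → ℕ) (hb : ∀ i, b i ≤ Fintype.card F - 2)
    (C : Set ((Fin r → Fˣ) → F))
    (hC : C = { c | ∃ f : MvPolynomial (Fin r) F,
        (∀ i, MvPolynomial.degreeOf i f ≤ b i) ∧
        c = fun t => MvPolynomial.eval (fun i => (t i : F)) f }) :
    Module.finrank F (Submodule.span F C) = ∏ i, (b i + 1) := by
  classical
  set em : ((i : Fin r) → Fin (b i + 1)) → (Fin r →₀ ℕ) :=
    fun e => Finsupp.equivFunOnFinite.symm (fun i => (e i : ℕ)) with hem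
  have hem_apply : ∀ e i, em e i = e i := fun e i => rfl
  have hem_inj : Function.Injective em := by
    intro e1 e2 h
    funext i
    have := congrArg (fun m : Fin r →₀ ℕ => m i) h
    simp only [hem_apply] at this
    exact Fin.ext this
  set E : MvPolynomial (Fin r) F →ₗ[F] ((Fin r → Fˣ) → F) :=
    { toFun := fun f => fun t => MvPolynomial.eval (fun i => (t i : F)) f
      map_add' := by intro f g; funext t; simp
      map_smul' := by intro c f; funext t; simp [MvPolynomial.smul_eval] } with hE
  set ψ : (((i : Fin r) → Fin (b i + 1)) → F) →ₗ[F] MvPolynomial (Fin r) F :=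
    ∑ e : (i : Fin r) → Fin (b i + 1),
      (MvPolynomial.monomial (em e)).comp (LinearMap.proj e) with hψdef
  have hψ : ∀ d, ψ d = ∑ e, MvPolynomial.monomial (em e) (d e) := by
    intro d
    rw [hψdef]
    simp [LinearMap.sum_apply]
  have hcoeff : ∀ d e₀, MvPolynomial.coeff (em e₀) (ψ d) = d e₀ := by
    intro d e₀
    rw [hψ, MvPolynomial.coeff_sum]
    rw [Finset.sum_eq_single e₀]
    · rw [MvPolynomial.coeff_monomial, if_pos rfl]
    · intro e _ hne
      rw [MvPolynomial.coeff_monomial, if_neg (fun h => hne (hem_inj h))]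
    · intro h
      exact absurd (mem_univ e₀) h
  have hdegψ : ∀ d i, MvPolynomial.degreeOf i (ψ d) ≤ b i := by
    intro d i
    rw [MvPolynomial.degreeOf_le_iff]
    intro m hm
    rw [hψ] at hm
    have := MvPolynomial.support_sum hm
    rw [Finset.mem_biUnion] at this
    obtain ⟨e, _, he⟩ := this
    have hme : m = em e := Finset.mem_singleton.mp (MvPolynomial.support_monomial_subset he)
    rw [hme, hem_apply]
    exact Fin.is_le _
  set φ := E.comp ψ with hφ
  have hq2 : 2 ≤ Fintype.card F := Fintype.one_lt_card
  have hprodpos : 0 < ∏ i, (Fintype.card F - 1 - b i) :=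
    Finset.prod_pos fun i _ => by have := hb i; omega
  have hφinj : Function.Injective φ := by
    rw [← LinearMap.ker_eq_bot, LinearMap.ker_eq_bot']
    intro d hd
    have hψd : ψ d = 0 := by
      by_contra hne
      have hkey := key_count r b (ψ d) hne (hdegψ d)
      have hempty : (univ.filter fun t : Fin r → Fˣ =>
          MvPolynomial.eval (fun i => (t i : F)) (ψ d) ≠ 0) = ∅ := by
        apply Finset.filter_eq_empty_iff.mpr
        intro t _
        have := congrFun hd t
        simpa [hφ, hE] using this
      rw [hempty] at hkey
      simp at hkey
      omega
    funext e
    have := hcoeff d e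
    rw [hψd] at this
    simpa using this.symm
  have hrange : C = ↑(LinearMap.range φ) := by
    rw [hC]
    ext c
    simp only [Set.mem_setOf_eq, SetLike.mem_coe, LinearMap.mem_range]
    constructor
    · rintro ⟨f, hdeg, rfl⟩
      refine ⟨fun e => MvPolynomial.coeff (em e) f, ?_⟩
      have hψf : ψ (fun e => MvPolynomial.coeff (em e) f) = f := by
        apply MvPolynomial.ext
        intro m
        by_cases hm : ∀ i, m i ≤ b i
        · set e₀ : (i : Fin r) → Fin (b i + 1) := fun i => ⟨m i, Nat.lt_succ_of_le (hm i)⟩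
          have hme : em e₀ = m := Finsupp.ext fun i => rfl
          rw [← hme, hcoeff]
        · push_neg at hm
          obtain ⟨i, hi⟩ := hm
          have h1 : MvPolynomial.coeff m f = 0 := by
            by_contra hne
            exact absurd ((MvPolynomial.monomial_le_degreeOf i
              (MvPolynomial.mem_support_iff.mpr hne)).trans (hdeg i)) (by omega)
          have h2 : MvPolynomial.coeff m (ψ (fun e => MvPolynomial.coeff (em e) f)) = 0 := by
            rw [hψ, MvPolynomial.coeff_sum]
            apply Finset.sum_eq_zero
            intro e _
            rw [MvPolynomial.coeff_monomial, if_neg]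
            intro h
            have : (e i : ℕ) = m i := by rw [← hem_apply e i, h]
            have := Fin.is_le (e i)
            omega
          rw [h1, h2]
      rw [hφ, LinearMap.comp_apply, hψf]
      rfl
    · rintro ⟨d, rfl⟩
      exact ⟨ψ d, hdegψ d, rfl⟩
  rw [hrange, Submodule.span_eq, LinearMap.finrank_range_of_inj hφinj,
    Module.finrank_fintype_fun_eq_card, Fintype.card_pi]
  exact Finset.prod_congr rfl fun i _ => Fintype.card_fin _


/-- The toric code of the box `[0,b₁] × ⋯ × [0,b_r]` has parameters
`[(q-1)^r, ∏ (bᵢ+1), ∏ (q-1-bᵢ)]`. -/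
theorem box_toric_code_parameters {F : Type*} [Field F] [Fintype F] [DecidableEq F]
    {r : ℕ} (hr : 1 ≤ r) (b : Fin r → ℕ) (hb : ∀ i, b i ≤ Fintype.card F - 2)
    (C : Set ((Fin r → Fˣ) → F))
    (hC : C = { c | ∃ f : MvPolynomial (Fin r) F,
        (∀ i, MvPolynomial.degreeOf i f ≤ b i) ∧
        c = fun t => MvPolynomial.eval (fun i => (t i : F)) f }) :
    Fintype.card (Fin r → Fˣ) = (Fintype.card F - 1) ^ r ∧
    Module.finrank F (Submodule.span F C) = ∏ i, (b i + 1) ∧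
    (∀ c ∈ C, c ≠ 0 → ∏ i, (Fintype.card F - 1 - b i) ≤ hammingNorm c) ∧
    (∃ c ∈ C, c ≠ 0 ∧ hammingNorm c = ∏ i, (Fintype.card F - 1 - b i)) := by
  have hq2 : 2 ≤ Fintype.card F := Fintype.one_lt_card
  have hprodpos : 0 < ∏ i, (Fintype.card F - 1 - b i) :=
    Finset.prod_pos fun i _ => by have := hb i; omega
  refine ⟨?_, dim_lemma b hb C hC, ?_, ?_⟩
  · rw [Fintype.card_fun, Fintype.card_units (α := F), Fintype.card_fin]
  · intro c hc hc0
    rw [hC] at hc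
    obtain ⟨f, hdeg, rfl⟩ := hc
    have hf : f ≠ 0 := by
      rintro rfl
      exact hc0 (by funext t; simp)
    exact key_count r b f hf hdeg
  · obtain ⟨f, hdeg, hcard⟩ := exists_min_weight_poly b hb
    refine ⟨fun t : Fin r → Fˣ => MvPolynomial.eval (fun i => (t i : F)) f,
      by rw [hC]; exact ⟨f, hdeg, rfl⟩, ?_, hcard⟩
    have h1 : hammingNorm (fun t : Fin r → Fˣ => MvPolynomial.eval (fun i => (t i : F)) f)
        = ∏ i, (Fintype.card F - 1 - b i) := hcard
    intro h
    simp only [h, hammingNorm_zero] at h1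
    exact absurd h1.symm (Nat.pos_iff_ne_zero.mp hprodpos)
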